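/- (Convergence of normalized imaginary-time evolution to the ground-subspace projection.) Fix d ≥ 1, E : Fin d → ℝ with E₀ := min_k E_k, and c : Fin d → ℂ with Σ_k |c_k|² = 1; assume γ₀ := Σ_{k : E_k = E₀} |c_k|² > 0. For β ∈ ℝ define v(β) ∈ ℂ^d by v(β)_k = c_k·e^{−β·E_k}. Then v(β) ≠ 0 for all β, and as β → ∞ the normalized vector v(β)/‖v(β)‖ converges (in the Euclidean norm on ℂ^d) to the vector u with u_k = c_k/√γ₀ when E_k = E₀ and u_k = 0 otherwise. -/

import Mathlib

/-- The unnormalized imaginary-time coordinate vector `v(β) ∈ ℂ^d`,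
`v(β)_k = c_k·e^{−β·E_k}`, as an element of Euclidean space. -/
noncomputable def iteVec {d : ℕ} (E : Fin d → ℝ) (c : Fin d → ℂ) (β : ℝ) :
    EuclideanSpace ℂ (Fin d) :=
  (WithLp.equiv 2 (Fin d → ℂ)).symm fun k => c k * Real.exp (-(β * E k))

open Classical Filter Topology in
/-- Convergence of normalized imaginary-time evolution to the ground-subspace
projection: for `d ≥ 1`, energies `E` with minimum `E₀`, amplitudes `c` with
`∑_k|c_k|² = 1` and ground overlap `γ₀ = ∑_{k : E_k = E₀}|c_k|² > 0`, the vector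
`v(β)` with `v(β)_k = c_k·e^{−βE_k}` is nonzero for all `β`, and as `β → ∞` the normalized
vector `v(β)/‖v(β)‖` converges in the Euclidean norm to the vector `u` with
`u_k = c_k/√γ₀` when `E_k = E₀` and `u_k = 0` otherwise. -/
theorem normalized_ite_tendsto_ground_projection {d : ℕ} (hd : 1 ≤ d)
    (E : Fin d → ℝ) (c : Fin d → ℂ) (hnorm : ∑ k, ‖c k‖ ^ 2 = 1)
    (E₀ : ℝ) (hE₀le : ∀ k, E₀ ≤ E k) (hE₀mem : ∃ k, E k = E₀)
    (hγ : 0 < ∑ k ∈ Finset.univ.filter fun k => E k = E₀, ‖c k‖ ^ 2) :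
    (∀ β : ℝ, iteVec E c β ≠ 0) ∧
    Filter.Tendsto (fun β : ℝ => ‖iteVec E c β‖⁻¹ • iteVec E c β) Filter.atTop
      (nhds ((WithLp.equiv 2 (Fin d → ℂ)).symm fun k =>
        if E k = E₀ then
          c k / ((Real.sqrt (∑ j ∈ Finset.univ.filter fun j => E j = E₀, ‖c j‖ ^ 2) : ℝ) : ℂ)
        else 0)) := by
  set γ : ℝ := ∑ k ∈ Finset.univ.filter fun k => E k = E₀, ‖c k‖ ^ 2 with hγdef
  -- some ground amplitude is nonzero
  obtain ⟨k₀, hk₀mem, hk₀⟩ : ∃ k ∈ Finset.univ.filter fun k => E k = E₀, c k ≠ 0 := by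
    by_contra h
    push_neg at h
    have : γ = 0 := Finset.sum_eq_zero fun k hk => by simp [h k hk]
    rw [this] at hγ; exact lt_irrefl 0 hγ
  have hne : ∀ β : ℝ, iteVec E c β ≠ 0 := by
    intro β h
    have h0 : iteVec E c β k₀ = 0 := by rw [h]; rfl
    have : c k₀ * (Real.exp (-(β * E k₀)) : ℂ) = 0 := h0
    rcases mul_eq_zero.mp this with h1 | h1
    · exact hk₀ h1
    · exact Real.exp_ne_zero _ (by exact_mod_cast h1)
  refine ⟨hne, ?_⟩
  -- shifted vector
  set w : ℝ → EuclideanSpace ℂ (Fin d) := fun β =>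
    (WithLp.equiv 2 (Fin d → ℂ)).symm fun k => c k * Real.exp (-(β * (E k - E₀))) with hw
  set u₀ : EuclideanSpace ℂ (Fin d) :=
    (WithLp.equiv 2 (Fin d → ℂ)).symm fun k => if E k = E₀ then c k else 0 with hu₀
  have hwapp : ∀ β k, w β k = c k * Real.exp (-(β * (E k - E₀))) := fun β k => rfl
  have hu₀app : ∀ k, u₀ k = if E k = E₀ then c k else 0 := fun k => rfl
  -- componentwise convergence
  have hwu : Tendsto w atTop (nhds u₀) := by
    rw [(PiLp.homeomorph 2 (fun _ : Fin d => ℂ)).isInducing.tendsto_nhds_iff, tendsto_pi_nhds]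
    intro k
    show Tendsto (fun β => (w β).ofLp k) atTop (nhds (u₀.ofLp k))
    simp only [hwapp, hu₀app]
    by_cases hk : E k = E₀
    · simp only [hk, if_pos, sub_self, mul_zero, neg_zero, Real.exp_zero]
      simpa using tendsto_const_nhds (x := c k) (f := atTop (α := ℝ))
    · rw [if_neg hk]
      have hpos : 0 < E k - E₀ := sub_pos.mpr (lt_of_le_of_ne (hE₀le k) (Ne.symm hk))
      have h1 : Tendsto (fun β : ℝ => -(β * (E k - E₀))) atTop atBot := by
        apply Filter.tendsto_neg_atBot_iff.mpr
        exact Tendsto.atTop_mul_const hpos tendsto_id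
      have h2 : Tendsto (fun β : ℝ => Real.exp (-(β * (E k - E₀)))) atTop (nhds 0) :=
        Real.tendsto_exp_atBot.comp h1
      have h3 : Tendsto (fun β : ℝ => ((Real.exp (-(β * (E k - E₀)))) : ℂ)) atTop
          (nhds (((0:ℝ):ℂ))) := (Complex.continuous_ofReal.tendsto 0).comp h2
      have h4 := h3.const_mul (c k)
      rw [Complex.ofReal_zero, mul_zero] at h4
      exact h4
  -- norm of u₀
  have hnormu₀ : ‖u₀‖ = Real.sqrt γ := by
    rw [EuclideanSpace.norm_eq]
    congr 1
    rw [hγdef, Finset.sum_filter]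
    apply Finset.sum_congr rfl
    intro k _
    by_cases hk : E k = E₀ <;> simp [hu₀app, hk]
  have hu₀ne : ‖u₀‖ ≠ 0 := by
    rw [hnormu₀]
    exact ne_of_gt (Real.sqrt_pos.mpr hγ)
  -- the target equals ‖u₀‖⁻¹ • u₀
  have htarget : ((WithLp.equiv 2 (Fin d → ℂ)).symm fun k =>
      if E k = E₀ then c k / ((Real.sqrt γ : ℝ) : ℂ) else 0) = ‖u₀‖⁻¹ • u₀ := by
    ext k
    rw [PiLp.smul_apply, hnormu₀]
    show (if E k = E₀ then c k / ((Real.sqrt γ : ℝ) : ℂ) else 0) = (Real.sqrt γ)⁻¹ • u₀ k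
    rw [hu₀app]
    by_cases hk : E k = E₀
    · simp [hk, Complex.real_smul, div_eq_inv_mul]
    · simp [hk]
  rw [htarget]
  -- relate iteVec and w
  have hiw : ∀ β : ℝ, ‖iteVec E c β‖⁻¹ • iteVec E c β = ‖w β‖⁻¹ • w β := by
    intro β
    have hveq : iteVec E c β = Real.exp (-(β * E₀)) • w β := by
      ext k
      rw [PiLp.smul_apply]
      show c k * (Real.exp (-(β * E k)) : ℂ) =
        Real.exp (-(β * E₀)) • (c k * (Real.exp (-(β * (E k - E₀))) : ℂ))
      rw [Complex.real_smul]
      push_cast [← Real.exp_add]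
      rw [mul_comm (Complex.exp (-(↑β * ↑E₀))), mul_assoc, ← Complex.exp_add]
      ring_nf
    have hnv : ‖iteVec E c β‖ = Real.exp (-(β * E₀)) * ‖w β‖ := by
      rw [hveq, norm_smul, Real.norm_eq_abs, abs_of_pos (Real.exp_pos _)]
    rw [hnv, hveq, mul_inv, smul_smul]
    congr 1
    field_simp
  simp only [hiw]
  exact ((hwu.norm.inv₀ hu₀ne).smul hwu)
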